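/- Let R be a commutative ring, let A be an m × n matrix with entries in R, and let b ∈ R^m be non-zero. Then the system of equations Ax = b is partition regular over R if and only if it has a constant solution, i.e. there exists r ∈ R such that A applied to the vector (r, r, …, r) equals b. -/

import Mathlib

private noncomputable def radoF : AddCircle (1:ℚ) → ℚ := fun z => (AddCircle.equivIco 1 0 z : ℚ)

private lemma radoF_mem (z : AddCircle (1:ℚ)) : radoF z ∈ Set.Ico (0:ℚ) 1 := by
  simpa [radoF] using (AddCircle.equivIco 1 0 z).2

private lemma radoF_coe (z : AddCircle (1:ℚ)) : ((radoF z : ℚ) : AddCircle (1:ℚ)) = z :=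
  (AddCircle.equivIco 1 0).symm_apply_apply z

private lemma rado_floor_aux (K : ℕ) (hK : 0 < K) (a b : ℚ)
    (ha : a ∈ Set.Ico (0:ℚ) 1) (hb : b ∈ Set.Ico (0:ℚ) 1)
    (h : (⌊a * K⌋).toNat = (⌊b * K⌋).toNat) : |a - b| < 1 / K := by
  have hK' : (0:ℚ) < K := by exact_mod_cast hK
  have hfa : (0:ℤ) ≤ ⌊a * K⌋ := Int.floor_nonneg.mpr (mul_nonneg ha.1 hK'.le)
  have hfb : (0:ℤ) ≤ ⌊b * K⌋ := Int.floor_nonneg.mpr (mul_nonneg hb.1 hK'.le)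
  have hfl : ⌊a * K⌋ = ⌊b * K⌋ := by omega
  have h1 := Int.abs_sub_lt_one_of_floor_eq_floor hfl
  have h2 : |(a - b) * K| < 1 := by rw [sub_mul]; exact h1
  have habs : |a - b| * K < 1 := by rwa [abs_mul, abs_of_pos hK'] at h2
  rwa [lt_div_iff₀ hK']

private lemma rado_colour_lt (K : ℕ) (hK : 0 < K) (a : ℚ) (ha : a ∈ Set.Ico (0:ℚ) 1) :
    (⌊a * K⌋).toNat < K := by
  have hK' : (0:ℚ) < K := by exact_mod_cast hK
  have h1 : ⌊a * K⌋ < (K:ℤ) := by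
    apply Int.floor_lt.mpr
    push_cast
    calc a * K < 1 * K := mul_lt_mul_of_pos_right ha.2 hK'
    _ = K := one_mul _
  omega

/-- **Rado's theorem for inhomogeneous systems over a general commutative ring.**
For an `m × n` matrix `A` over a commutative ring `R` and non-zero `b ∈ R^m`, the system
`Ax = b` is partition regular over `R` iff it has a constant solution. -/
theorem rado_inhomogeneous_ring {R : Type*} [CommRing R] {m n : ℕ}
    (A : Matrix (Fin m) (Fin n) R) (b : Fin m → R) (hb : b ≠ 0) :
    (∀ (κ : Type) [Finite κ] (c : R → κ),
      ∃ x : Fin n → R, (∀ i j : Fin n, c (x i) = c (x j)) ∧ A.mulVec x = b) ↔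
    (∃ r : R, A.mulVec (fun _ => r) = b) := by
  constructor
  · intro h
    by_contra hcon
    -- `s` is the row-sum vector
    set s : Fin m → R := A.mulVec 1 with hs
    have hmv : ∀ r : R, A.mulVec (fun _ => r) = r • s := by
      intro r
      funext i
      simp only [hs, Matrix.mulVec, dotProduct, Pi.smul_apply, smul_eq_mul,
        Finset.mul_sum, Pi.one_apply, mul_one]
      exact Finset.sum_congr rfl fun j _ => mul_comm _ _
    -- quotient module and character
    set N := (Fin m → R) ⧸ (Submodule.span R {s}) with hN
    set π : (Fin m → R) →ₗ[R] N := Submodule.mkQ (Submodule.span R {s}) with hπ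
    have hbN : π b ≠ 0 := by
      intro h0
      apply hcon
      have hmem : b ∈ Submodule.span R {s} := by
        rwa [hπ, Submodule.mkQ_apply, Submodule.Quotient.mk_eq_zero] at h0
      obtain ⟨r, hr⟩ := Submodule.mem_span_singleton.mp hmem
      exact ⟨r, by rw [hmv]; exact hr⟩
    obtain ⟨χ, hχ⟩ := CharacterModule.exists_character_apply_ne_zero_of_ne_zero hbN
    -- the additive map `G : R^m →+ AddCircle (1:ℚ)`
    set G : (Fin m → R) →+ AddCircle (1:ℚ) := χ.comp π.toAddMonoidHom with hG
    have hGb : G b ≠ 0 := hχ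
    -- columns
    set col : Fin n → R → (Fin m → R) := fun j r i => A i j * r with hcol
    have hcol_sum : ∀ x : Fin n → R, (∑ j, col j (x j)) = A.mulVec x := by
      intro x
      funext i
      simp [hcol, Matrix.mulVec, dotProduct, Finset.sum_apply]
    have hGconst : ∀ r : R, (∑ j, G (col j r)) = 0 := by
      intro r
      have hcc : (∑ j, col j r) = r • s := by
        rw [← hmv r]
        funext i
        simp only [hcol, Finset.sum_apply, Matrix.mulVec, dotProduct]
      rw [← map_sum, hcc]
      have hπ0 : π (r • s) = 0 := by
        rw [hπ, Submodule.mkQ_apply, Submodule.Quotient.mk_eq_zero]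
        exact Submodule.smul_mem _ r (Submodule.mem_span_singleton_self s)
      show χ (π (r • s)) = 0
      rw [hπ0, map_zero]
    rcases Nat.eq_zero_or_pos n with hn | hn
    · subst hn
      obtain ⟨x, -, hx⟩ := h Unit (fun _ => ())
      apply hGb
      rw [← hx, ← hcol_sum x]
      simp
    -- the target value
    set t₀ : ℚ := radoF (G b) with ht₀
    have ht₀mem : t₀ ∈ Set.Ico (0:ℚ) 1 := radoF_mem (G b)
    have ht₀coe : ((t₀ : ℚ) : AddCircle (1:ℚ)) = G b := radoF_coe (G b)
    have ht₀pos : 0 < t₀ := by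
      rcases lt_or_eq_of_le ht₀mem.1 with h' | h'
      · exact h'
      · exfalso; apply hGb; rw [← ht₀coe, ← h']; norm_num
    have ht₀lt : t₀ < 1 := ht₀mem.2
    set δ : ℚ := min t₀ (1 - t₀) with hδ
    have hδpos : 0 < δ := lt_min ht₀pos (by linarith)
    obtain ⟨K, hKgt⟩ := exists_nat_gt ((n + 1) / δ)
    have hKq : (0:ℚ) < K := lt_trans (by positivity) hKgt
    have hKpos : 0 < K := by exact_mod_cast hKq
    -- the colouring
    obtain ⟨x, hmono, hx⟩ := h (Fin n → Fin K)
      (fun r j => ⟨(⌊ radoF (G (col j r)) * K ⌋).toNat,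
        rado_colour_lt K hKpos _ (radoF_mem _)⟩)
    set j₀ : Fin n := ⟨0, hn⟩ with hj₀
    set r₀ : R := x j₀ with hr₀
    set a : Fin n → ℚ := fun j => radoF (G (col j (x j))) with ha
    set b' : Fin n → ℚ := fun j => radoF (G (col j r₀)) with hb'
    have hdiff : ∀ j, |a j - b' j| < 1 / K := by
      intro j
      refine rado_floor_aux K hKpos _ _ (radoF_mem _) (radoF_mem _) ?_
      have h1 := congrFun (hmono j j₀) j
      exact congrArg Fin.val h1
    set q : ℚ := ∑ j, (a j - b' j) with hq
    have hqabs : |q| ≤ n / K := by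
      calc |q| ≤ ∑ j, |a j - b' j| := Finset.abs_sum_le_sum_abs _ _
      _ ≤ ∑ _j : Fin n, 1 / (K:ℚ) := Finset.sum_le_sum fun j _ => (hdiff j).le
      _ = n / K := by simp [Finset.sum_const, mul_comm]; ring
    -- the key circle identity
    have hsum1 : (∑ j, G (col j (x j))) = G b := by
      rw [← map_sum, hcol_sum, hx]
    have key : ((q : ℚ) : AddCircle (1:ℚ)) = G b := by
      have h1 : ((q : ℚ) : AddCircle (1:ℚ))
          = ∑ j, (((a j - b' j : ℚ)) : AddCircle (1:ℚ)) :=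
        map_sum (QuotientAddGroup.mk' _) _ _
      rw [h1]
      have h2 : ∀ j : Fin n, (((a j - b' j : ℚ)) : AddCircle (1:ℚ))
          = G (col j (x j)) - G (col j r₀) := by
        intro j
        have := map_sub (QuotientAddGroup.mk' (AddSubgroup.zmultiples (1:ℚ))) (a j) (b' j)
        rw [QuotientAddGroup.mk'_apply] at this
        rw [this]
        congr 1
        · exact radoF_coe _
        · exact radoF_coe _
      rw [Finset.sum_congr rfl (fun j _ => h2 j), Finset.sum_sub_distrib, hsum1, hGconst r₀,
        sub_zero]
    -- conclude
    have hqt : ((q - t₀ : ℚ) : AddCircle (1:ℚ)) = 0 := by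
      rw [AddCircle.coe_sub, key, ht₀coe, sub_self]
    have hmem2 : (q - t₀) ∈ AddSubgroup.zmultiples (1:ℚ) :=
      (QuotientAddGroup.eq_zero_iff _).mp hqt
    obtain ⟨k, hk⟩ := AddSubgroup.mem_zmultiples_iff.mp hmem2
    have hk' : (k : ℚ) = q - t₀ := by rw [← hk]; simp
    -- bounds
    have hnK : (n : ℚ) / K < δ := by
      rw [div_lt_iff₀ hKq]
      have h3 : ((n:ℚ) + 1) < δ * K := by
        rw [div_lt_iff₀ hδpos] at hKgt
        linarith [hKgt]
      linarith
    have hqδ : |q| < δ := lt_of_le_of_lt hqabs hnK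
    have hup : q - t₀ < 0 := by
      have : q < t₀ := lt_of_lt_of_le (lt_of_le_of_lt (le_abs_self q) hqδ) (min_le_left _ _)
      linarith
    have hlo : (-1 : ℚ) < q - t₀ := by
      have h4 : -q ≤ |q| := neg_le_abs q
      have h5 : δ ≤ 1 - t₀ := min_le_right _ _
      linarith
    have hk1 : (-1 : ℚ) < (k:ℚ) := by rw [hk']; exact hlo
    have hk2 : (k:ℚ) < 0 := by rw [hk']; exact hup
    have : (-1 : ℤ) < k ∧ k < 0 := ⟨by exact_mod_cast hk1, by exact_mod_cast hk2⟩
    omega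
  · rintro ⟨r, hr⟩
    intro κ _ c
    exact ⟨fun _ => r, fun i j => rfl, hr⟩
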